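/- Let Φ be an automorphism of ℤ^n whose induced automorphism of (ℤ/3ℤ)^n is the identity. Then every Φ-periodic element of ℤ^n is fixed by Φ: if v ∈ ℤ^n and Φ^k(v) = v for some k ≥ 1, then Φ(v) = v. -/

import Mathlib

private lemma int_zero_of_forall_pow3_dvd (a : ℤ) (h : ∀ m : ℕ, (3:ℤ)^m ∣ a) : a = 0 := by
  by_contra ha
  have h1 : ((3:ℤ)^a.natAbs) ≤ |a| := Int.le_of_dvd (abs_pos.mpr ha) ((dvd_abs _ _).mpr (h _))
  have h2 : (a.natAbs : ℤ) < (3:ℤ)^a.natAbs := by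
    have := Nat.lt_pow_self (n := a.natAbs) (by norm_num : 1 < 3)
    exact_mod_cast this
  rw [Int.abs_eq_natAbs] at h1
  omega

section

variable {n : ℕ}

private lemma key_step (Φ : (Fin n → ℤ) ≃ₗ[ℤ] (Fin n → ℤ))
    (hd : ∀ (x : Fin n → ℤ) (i : Fin n), (3:ℤ) ∣ Φ x i - x i) (m : ℕ) (x : Fin n → ℤ) (hx : ∀ i, (3:ℤ)^m ∣ x i) (i : Fin n) :
    (3:ℤ)^(m+1) ∣ Φ x i - x i := by
  set y : Fin n → ℤ := fun j => x j / 3^m with hy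
  have hxy : x = ((3:ℤ)^m) • y := by
    funext j
    simp only [Pi.smul_apply, smul_eq_mul, hy]
    exact (Int.mul_ediv_cancel' (hx j)).symm
  have hΦ : Φ x = ((3:ℤ)^m) • Φ y := by rw [hxy, map_smul]
  rw [hΦ, hxy]
  simp only [Pi.smul_apply, smul_eq_mul]
  rw [← mul_sub, pow_succ]
  exact mul_dvd_mul_left _ (hd y i)

private lemma hd_pow (Φ : (Fin n → ℤ) ≃ₗ[ℤ] (Fin n → ℤ))
    (hd : ∀ (x : Fin n → ℤ) (i : Fin n), (3:ℤ) ∣ Φ x i - x i) (j : ℕ) (x : Fin n → ℤ) (i : Fin n) :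
    (3:ℤ) ∣ (Φ ^ j) x i - x i := by
  induction j with
  | zero => simp
  | succ j ih =>
    have hstep : (Φ ^ (j+1)) x = Φ ((Φ ^ j) x) := by rw [pow_succ']; rfl
    have heq : (Φ ^ (j+1)) x i - x i =
        (Φ ((Φ ^ j) x) i - (Φ ^ j) x i) + ((Φ ^ j) x i - x i) := by
      rw [hstep]; ring
    rw [heq]
    exact dvd_add (hd _ i) ih

private lemma iter_congr (Φ : (Fin n → ℤ) ≃ₗ[ℤ] (Fin n → ℤ))
    (hd : ∀ (x : Fin n → ℤ) (i : Fin n), (3:ℤ) ∣ Φ x i - x i) (m : ℕ) (u : Fin n → ℤ) (hu : ∀ i, (3:ℤ)^m ∣ u i)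
    (j : ℕ) (i : Fin n) : (3:ℤ)^(m+1) ∣ (Φ ^ j) u i - u i := by
  induction j generalizing i with
  | zero => simp
  | succ j ih =>
    have hstep : (Φ ^ (j+1)) u = Φ ((Φ ^ j) u) := by rw [pow_succ']; rfl
    have hdvd : ∀ i', (3:ℤ)^m ∣ (Φ ^ j) u i' := by
      intro i'
      have h1 : (3:ℤ)^m ∣ (Φ ^ j) u i' - u i' :=
        dvd_trans (pow_dvd_pow 3 (Nat.le_succ m)) (ih i')
      have := dvd_add h1 (hu i')
      simpa using this
    have heq : (Φ ^ (j+1)) u i - u i =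
        (Φ ((Φ ^ j) u) i - (Φ ^ j) u i) + ((Φ ^ j) u i - u i) := by
      rw [hstep]; ring
    rw [heq]
    exact dvd_add (key_step Φ hd m _ hdvd i) (ih i)

private lemma telescope (Φ : (Fin n → ℤ) ≃ₗ[ℤ] (Fin n → ℤ)) (v : Fin n → ℤ) (k : ℕ) :
    (Φ ^ k) v - v = ∑ j ∈ Finset.range k, (Φ ^ j) (Φ v - v) := by
  induction k with
  | zero => simp
  | succ k ih =>
    rw [Finset.sum_range_succ, ← ih]
    have hstep : (Φ ^ (k+1)) v = (Φ ^ k) (Φ v) := by rw [pow_succ]; rfl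
    rw [hstep, map_sub]
    abel

private lemma case_coprime (Φ : (Fin n → ℤ) ≃ₗ[ℤ] (Fin n → ℤ))
    (hd : ∀ (x : Fin n → ℤ) (i : Fin n), (3:ℤ) ∣ Φ x i - x i) (v : Fin n → ℤ) (k : ℕ) (hk : 1 ≤ k) (h3k : ¬ (3 ∣ k))
    (hper : (Φ ^ k) v = v) : Φ v = v := by
  set u : Fin n → ℤ := Φ v - v with hu
  have hcop : ∀ m : ℕ, IsCoprime ((3:ℤ)^m) (k : ℤ) := by
    intro m
    apply IsCoprime.pow_left
    have hnd : ¬ ((3:ℤ) ∣ (k:ℤ)) := by exact_mod_cast h3k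
    exact Int.prime_three.coprime_iff_not_dvd.mpr hnd
  have hsum : ∑ j ∈ Finset.range k, (Φ ^ j) u = 0 := by
    rw [← telescope, hper, sub_self]
  have main : ∀ m : ℕ, ∀ i, (3:ℤ)^m ∣ u i := by
    intro m
    induction m with
    | zero => intro i; simp
    | succ m ih =>
      intro i
      have hsum_i : ∑ j ∈ Finset.range k, (Φ ^ j) u i = 0 := by
        have := congrFun hsum i
        simpa using this
      have hdiff : (3:ℤ)^(m+1) ∣ ∑ j ∈ Finset.range k, ((Φ ^ j) u i - u i) :=
        Finset.dvd_sum (fun j _ => iter_congr Φ hd m u ih j i)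
      have heq : ∑ j ∈ Finset.range k, ((Φ ^ j) u i - u i) = - ((k:ℤ) * u i) := by
        rw [Finset.sum_sub_distrib, hsum_i, Finset.sum_const, Finset.card_range]
        simp [mul_comm]
      rw [heq, dvd_neg] at hdiff
      exact (hcop (m+1)).dvd_of_dvd_mul_left hdiff
  have hu0 : u = 0 := funext fun i => int_zero_of_forall_pow3_dvd _ (fun m => main m i)
  have : Φ v - v = 0 := hu0
  exact sub_eq_zero.mp this

private lemma case_three (Φ : (Fin n → ℤ) ≃ₗ[ℤ] (Fin n → ℤ))
    (hd : ∀ (x : Fin n → ℤ) (i : Fin n), (3:ℤ) ∣ Φ x i - x i) (v : Fin n → ℤ) (hper : (Φ ^ 3) v = v) : Φ v = v := by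
  set u : Fin n → ℤ := Φ v - v with hu
  have hsum : u + Φ u + Φ (Φ u) = 0 := by
    have ht := telescope Φ v 3
    rw [hper, sub_self] at ht
    have h3 : ∑ j ∈ Finset.range 3, (Φ ^ j) u = 0 := ht.symm
    have hp2 : (Φ ^ 2) u = Φ (Φ u) := by rw [pow_two]; rfl
    simpa [Finset.sum_range_succ, pow_one, hp2] using h3
  have main : ∀ m : ℕ, ∀ i, (3:ℤ)^m ∣ u i := by
    intro m
    induction m with
    | zero => intro i; simp
    | succ m ih =>
      intro i
      set w : Fin n → ℤ := Φ u - u with hw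
      have hw1 : ∀ i', (3:ℤ)^(m+1) ∣ w i' := fun i' => key_step Φ hd m u ih i'
      have hw2 : (3:ℤ)^(m+2) ∣ Φ w i - w i := key_step Φ hd (m+1) w hw1 i
      have hsum_i : u i + Φ u i + Φ (Φ u) i = 0 := by
        have := congrFun hsum i
        simpa using this
      have hwa : w i = Φ u i - u i := by rw [hw]; simp
      have hΦw : Φ w i = Φ (Φ u) i - Φ u i := by
        have : Φ w = Φ (Φ u) - Φ u := by rw [hw, map_sub]
        rw [this]; simp
      have key : 3 * u i = -(3 * w i + (Φ w i - w i)) := by linarith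
      have hdvd3u : (3:ℤ)^(m+2) ∣ 3 * u i := by
        rw [key, dvd_neg]
        refine dvd_add ?_ hw2
        have h32 : (3:ℤ)^(m+2) = 3 * 3^(m+1) := by ring
        rw [h32]
        exact mul_dvd_mul_left 3 (hw1 i)
      have h32 : (3:ℤ)^(m+2) = 3 * 3^(m+1) := by ring
      rw [h32] at hdvd3u
      exact (mul_dvd_mul_iff_left (by norm_num : (3:ℤ) ≠ 0)).mp hdvd3u
  have hu0 : u = 0 := funext fun i => int_zero_of_forall_pow3_dvd _ (fun m => main m i)
  have : Φ v - v = 0 := hu0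
  exact sub_eq_zero.mp this

end

theorem periodic_fixed_of_trivial_mod3 (n : ℕ) (Φ : (Fin n → ℤ) ≃ₗ[ℤ] (Fin n → ℤ))
    (hmod : ∀ (v : Fin n → ℤ) (i : Fin n), ((Φ v i : ℤ) : ZMod 3) = ((v i : ℤ) : ZMod 3))
    (v : Fin n → ℤ) (k : ℕ) (hk : 1 ≤ k) (hper : (Φ ^ k) v = v) : Φ v = v := by
  have hd : ∀ (x : Fin n → ℤ) (i : Fin n), (3:ℤ) ∣ Φ x i - x i := by
    intro x i
    have := (ZMod.intCast_eq_intCast_iff _ _ _).mp (hmod x i)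
    exact this.symm.dvd
  clear hmod
  revert hk hper
  induction k using Nat.strong_induction_on with
  | _ k ih =>
    intro hk hper
    by_cases h3 : 3 ∣ k
    · obtain ⟨k', rfl⟩ := h3
      have hk' : 1 ≤ k' := by omega
      have hdΨ : ∀ (x : Fin n → ℤ) (i : Fin n), (3:ℤ) ∣ (Φ ^ k') x i - x i :=
        hd_pow Φ hd k'
      have hper3 : ((Φ ^ k') ^ 3) v = v := by
        rw [← pow_mul, mul_comm]; exact hper
      have hfix : (Φ ^ k') v = v := case_three (Φ ^ k') hdΨ v hper3
      exact ih k' (by omega) hk' hfix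
    · exact case_coprime Φ hd v k hk h3 hper
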